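/- The function g(ρ) = 2ρφ(ρ)/(2Φ(ρ)-1) is strictly decreasing on (0,∞): for all 0 < ρ < ρ', g(ρ') < g(ρ). Consequently, for fixed η > 0, the variance η²(1 - g(ρ)) of the symmetric doubly truncated normal distribution is monotone: if 0 < ρ ≤ ρ' then η²(1 - g(ρ)) ≤ η²(1 - g(ρ')). -/

import Mathlib

open MeasureTheory Real Set Filter

/-- The standard normal density `φ(x) = (2π)^(-1/2) exp(-x²/2)`. -/
noncomputable def stdNormalPDF (x : ℝ) : ℝ :=
  (Real.sqrt (2 * Real.pi))⁻¹ * Real.exp (-x ^ 2 / 2)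

/-- The standard normal CDF `Φ(x) = ∫_{-∞}^x φ(t) dt`. -/
noncomputable def stdNormalCDF (x : ℝ) : ℝ :=
  ∫ t in Set.Iic x, stdNormalPDF t

/-- The symmetric doubly truncated normal (SDTN) density with location `μ`, scale `η`
and truncation parameter `ρ`. -/
noncomputable def sdtnPDF (μ η ρ : ℝ) (x : ℝ) : ℝ :=
  if x ∈ Set.Icc (μ - ρ * η) (μ + ρ * η) then
    stdNormalPDF ((x - μ) / η) / (η * (2 * stdNormalCDF ρ - 1))
  else 0

lemma pdf_pos (x : ℝ) : 0 < stdNormalPDF x := by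
  unfold stdNormalPDF
  have : 0 < Real.sqrt (2 * Real.pi) := Real.sqrt_pos.2 (by positivity)
  positivity

lemma pdf_cont : Continuous stdNormalPDF := by
  unfold stdNormalPDF; fun_prop

lemma pdf_integrable : Integrable stdNormalPDF := by
  have h : Integrable (fun x : ℝ => Real.exp (-(1/2 : ℝ) * x ^ 2)) :=
    integrable_exp_neg_mul_sq (by norm_num)
  have h2 := h.const_mul (Real.sqrt (2 * Real.pi))⁻¹
  have he : stdNormalPDF = fun x : ℝ =>
      (Real.sqrt (2 * Real.pi))⁻¹ * Real.exp (-(1/2 : ℝ) * x ^ 2) := by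
    funext x; unfold stdNormalPDF; rw [show -x^2/2 = -(1/2 : ℝ) * x^2 by ring]
  rw [he]; exact h2

lemma pdf_hasDeriv (x : ℝ) : HasDerivAt stdNormalPDF (-x * stdNormalPDF x) x := by
  have h1 : HasDerivAt (fun y : ℝ => -y ^ 2 / 2) (-x) x := by
    have h := (hasDerivAt_pow 2 x).neg.div_const 2
    exact h.congr_deriv (by norm_num; ring)
  have h2 := (h1.exp).const_mul (Real.sqrt (2 * Real.pi))⁻¹
  have h3 : -x * stdNormalPDF x
      = (Real.sqrt (2 * Real.pi))⁻¹ * (Real.exp (-x ^ 2 / 2) * -x) := by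
    unfold stdNormalPDF; ring
  rw [h3]
  exact h2

lemma cdf_sub (a b : ℝ) :
    stdNormalCDF b - stdNormalCDF a = ∫ t in a..b, stdNormalPDF t :=
  intervalIntegral.integral_Iic_sub_Iic pdf_integrable.integrableOn pdf_integrable.integrableOn

lemma cdf_hasDeriv (x : ℝ) : HasDerivAt stdNormalCDF (stdNormalPDF x) x := by
  have h : HasDerivAt (fun u => ∫ t in (0:ℝ)..u, stdNormalPDF t) (stdNormalPDF x) x :=
    intervalIntegral.integral_hasDerivAt_right pdf_integrable.intervalIntegrable
      (pdf_cont.stronglyMeasurableAtFilter _ _) pdf_cont.continuousAt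
  have he : stdNormalCDF = fun u => stdNormalCDF 0 + ∫ t in (0:ℝ)..u, stdNormalPDF t := by
    funext u; rw [← cdf_sub]; ring
  rw [he]
  simpa using (h.const_add (stdNormalCDF 0))

lemma pdf_total : ∫ x : ℝ, stdNormalPDF x = 1 := by
  have he : stdNormalPDF = fun x : ℝ =>
      (Real.sqrt (2 * Real.pi))⁻¹ * Real.exp (-(1/2 : ℝ) * x ^ 2) := by
    funext x; unfold stdNormalPDF; rw [show -x^2/2 = -(1/2 : ℝ) * x^2 by ring]
  rw [he, MeasureTheory.integral_const_mul, integral_gaussian]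
  rw [show Real.pi / (1/2 : ℝ) = 2 * Real.pi by ring]
  rw [inv_mul_cancel₀ (by positivity : Real.sqrt (2 * Real.pi) ≠ 0)]

lemma cdf_zero : stdNormalCDF 0 = 1 / 2 := by
  have hsymm : stdNormalCDF 0 = ∫ x in Set.Ioi (0:ℝ), stdNormalPDF x := by
    unfold stdNormalCDF
    rw [show (0:ℝ) = -0 by norm_num, ← integral_comp_neg_Iic 0 stdNormalPDF]
    simp only [neg_zero]
    congr 1
    funext x
    unfold stdNormalPDF
    norm_num
  have hadd := intervalIntegral.integral_Iic_add_Ioi (b := (0:ℝ))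
    pdf_integrable.integrableOn pdf_integrable.integrableOn
  rw [pdf_total] at hadd
  have : stdNormalCDF 0 + stdNormalCDF 0 = 1 := by
    rw (occs := .pos [2]) [hsymm]
    exact hadd
  linarith

lemma D_pos {x : ℝ} (hx : 0 < x) : 0 < 2 * stdNormalCDF x - 1 := by
  have h := cdf_sub 0 x
  have hI : 0 < ∫ t in (0:ℝ)..x, stdNormalPDF t :=
    intervalIntegral.intervalIntegral_pos_of_pos pdf_integrable.intervalIntegrable pdf_pos hx
  have h0 := cdf_zero
  linarith

noncomputable def Dfun (x : ℝ) : ℝ := 2 * stdNormalCDF x - 1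

noncomputable def hfun (x : ℝ) : ℝ := (1 - x ^ 2) * Dfun x - 2 * x * stdNormalPDF x

noncomputable def gfun (x : ℝ) : ℝ := 2 * x * stdNormalPDF x / Dfun x

lemma D_hasDeriv (x : ℝ) : HasDerivAt Dfun (2 * stdNormalPDF x) x := by
  unfold Dfun
  exact ((cdf_hasDeriv x).const_mul 2).sub_const 1

lemma hfun_hasDeriv (x : ℝ) : HasDerivAt hfun (-2 * x * Dfun x) x := by
  have h1 : HasDerivAt (fun y : ℝ => 1 - y ^ 2) (-(2 * x)) x := by
    have := (hasDerivAt_pow 2 x).const_sub 1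
    exact this.congr_deriv (by norm_num)
  have h2 := h1.mul (D_hasDeriv x)
  have h3 : HasDerivAt (fun y : ℝ => 2 * y) 2 x := by
    simpa using (hasDerivAt_id x).const_mul 2
  have h4 := h3.mul (pdf_hasDeriv x)
  have h5 := h2.sub h4
  have he : hfun = fun y => (1 - y ^ 2) * Dfun y - 2 * y * stdNormalPDF y := rfl
  rw [he]
  exact h5.congr_deriv (by ring)

lemma hfun_neg {x : ℝ} (hx : 0 < x) : hfun x < 0 := by
  have hanti : StrictAntiOn hfun (Set.Ici 0) := by
    apply strictAntiOn_of_deriv_neg (convex_Ici 0)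
    · exact (Differentiable.continuous (fun y => (hfun_hasDeriv y).differentiableAt)).continuousOn
    · intro y hy
      rw [interior_Ici] at hy
      rw [(hfun_hasDeriv y).deriv]
      have hy' : (0:ℝ) < y := hy
      have hD : 0 < Dfun y := D_pos hy'
      have : 0 < 2 * y * Dfun y := mul_pos (by linarith) hD
      linarith
  have h0 : hfun 0 = 0 := by
    unfold hfun Dfun
    rw [cdf_zero]; ring
  have := hanti (Set.self_mem_Ici) (Set.mem_Ici.2 hx.le) hx
  linarith

lemma gfun_anti : StrictAntiOn gfun (Set.Ioi 0) := by
  have hderiv : ∀ x : ℝ, 0 < x →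
      HasDerivAt gfun ((( 2 * stdNormalPDF x + 2 * x * (-x * stdNormalPDF x)) * Dfun x
        - 2 * x * stdNormalPDF x * (2 * stdNormalPDF x)) / Dfun x ^ 2) x := by
    intro x hx
    have h3 : HasDerivAt (fun y : ℝ => 2 * y) 2 x := by
      simpa using (hasDerivAt_id x).const_mul 2
    have hN := h3.mul (pdf_hasDeriv x)
    have hg := hN.div (D_hasDeriv x) (D_pos hx).ne'
    exact hg
  apply strictAntiOn_of_deriv_neg (convex_Ioi 0)
  · intro x hx
    exact ((hderiv x hx).differentiableAt).continuousAt.continuousWithinAt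
  · intro x hx
    rw [interior_Ioi] at hx
    rw [(hderiv x hx).deriv]
    apply div_neg_of_neg_of_pos
    · have key : (2 * stdNormalPDF x + 2 * x * (-x * stdNormalPDF x)) * Dfun x
          - 2 * x * stdNormalPDF x * (2 * stdNormalPDF x)
          = 2 * stdNormalPDF x * hfun x := by
        unfold hfun; ring
      rw [key]
      exact mul_neg_of_pos_of_neg (by linarith [pdf_pos x]) (hfun_neg hx)
    · exact pow_pos (D_pos hx) 2

theorem sdtn_g_strict_anti :
    (∀ ρ ρ' : ℝ, 0 < ρ → ρ < ρ' →
      2 * ρ' * stdNormalPDF ρ' / (2 * stdNormalCDF ρ' - 1) <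
        2 * ρ * stdNormalPDF ρ / (2 * stdNormalCDF ρ - 1)) ∧
    ∀ (η ρ ρ' : ℝ), 0 < η → 0 < ρ → ρ ≤ ρ' →
      η ^ 2 * (1 - 2 * ρ * stdNormalPDF ρ / (2 * stdNormalCDF ρ - 1)) ≤
        η ^ 2 * (1 - 2 * ρ' * stdNormalPDF ρ' / (2 * stdNormalCDF ρ' - 1)) := by
  have hg : ∀ ρ ρ' : ℝ, 0 < ρ → ρ < ρ' →
      2 * ρ' * stdNormalPDF ρ' / (2 * stdNormalCDF ρ' - 1) <
        2 * ρ * stdNormalPDF ρ / (2 * stdNormalCDF ρ - 1) := by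
    intro ρ ρ' hρ hlt
    have := gfun_anti (Set.mem_Ioi.2 hρ) (Set.mem_Ioi.2 (hρ.trans hlt)) hlt
    simpa [gfun, Dfun] using this
  refine ⟨hg, ?_⟩
  intro η ρ ρ' hη hρ hle
  rcases eq_or_lt_of_le hle with rfl | hlt
  · exact le_rfl
  · have h := hg ρ ρ' hρ hlt
    exact mul_le_mul_of_nonneg_left (by linarith) (sq_nonneg η)
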